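/- Let s : ℕ → ℝ satisfy 0 ≤ s r < 1 for every r ≥ 1, and suppose that the series ∑_{r ≥ 1} (φ(r)/r) · log(1/(1 − s r)) converges, where φ is Euler's totient function. Then the family indexed by n ≥ 1 of the terms (1/n) · ∑_{d ∣ n} φ(d) · (s d)^(n/d) is summable, and ∑_{n ≥ 1} (1/n) ∑_{d ∣ n} φ(d) (s d)^(n/d) = ∑_{r ≥ 1} (φ(r)/r) · log(1/(1 − s r)). -/

import Mathlib

open scoped BigOperators
set_option maxHeartbeats 1000000

/-- The cycle index sum of the species Cyc: the total weight
`(1/n) ∑_{d ∣ n} φ(d) s_d^{n/d}` of symmetries on cycles of size `n`,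
summed over all `n ≥ 1`, equals the regrouped sum
`∑_{r ≥ 1} (φ(r)/r) log(1/(1-s_r))` over the automorphism order `r`. -/
theorem stmt_6 (s : ℕ → ℝ) (h0 : ∀ r, 1 ≤ r → 0 ≤ s r) (h1 : ∀ r, 1 ≤ r → s r < 1)
    (hZ : Summable fun r : {r : ℕ // 1 ≤ r} =>
      ((Nat.totient (r : ℕ) : ℝ) / ((r : ℕ) : ℝ)) * Real.log (1 / (1 - s (r : ℕ)))) :
    Summable (fun n : {n : ℕ // 1 ≤ n} =>
      (1 / ((n : ℕ) : ℝ)) *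
        ∑ d ∈ (n : ℕ).divisors, (Nat.totient d : ℝ) * s d ^ ((n : ℕ) / d)) ∧
    ∑' n : {n : ℕ // 1 ≤ n},
        (1 / ((n : ℕ) : ℝ)) *
          ∑ d ∈ (n : ℕ).divisors, (Nat.totient d : ℝ) * s d ^ ((n : ℕ) / d)
      = ∑' r : {r : ℕ // 1 ≤ r},
          ((Nat.totient (r : ℕ) : ℝ) / ((r : ℕ) : ℝ)) * Real.log (1 / (1 - s (r : ℕ))) := by
  classical
  set T := {n : ℕ // 1 ≤ n} with hT
  set f : T × T → ℝ := fun p =>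
    (Nat.totient (p.1 : ℕ) : ℝ) * s (p.1 : ℕ) ^ (p.2 : ℕ) / (((p.1 : ℕ) : ℝ) * ((p.2 : ℕ) : ℝ))
    with hf
  -- the ℕ ≃ T shift equivalence
  let e : ℕ ≃ T :=
    { toFun := fun k => ⟨k + 1, Nat.succ_le_succ (Nat.zero_le k)⟩
      invFun := fun k => (k : ℕ) - 1
      left_inv := fun k => by simp
      right_inv := fun k => by
        ext
        exact Nat.succ_pred_eq_of_pos k.2 }
  -- fiberwise sums over k
  have key : ∀ r : T, HasSum (fun k : T => f (r, k))
      ((Nat.totient (r : ℕ) : ℝ) / ((r : ℕ) : ℝ) * Real.log (1 / (1 - s (r : ℕ)))) := by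
    intro r
    have hr0 : (0:ℝ) < ((r : ℕ) : ℝ) := by exact_mod_cast r.2
    have hx : |s (r : ℕ)| < 1 := by
      rw [abs_of_nonneg (h0 _ r.2)]; exact h1 _ r.2
    have H := (Real.hasSum_pow_div_log_of_abs_lt_one hx).mul_left
      ((Nat.totient (r : ℕ) : ℝ) / ((r : ℕ) : ℝ))
    have hlog : Real.log (1 / (1 - s (r : ℕ))) = -Real.log (1 - s (r : ℕ)) := by
      rw [one_div, Real.log_inv]
    rw [← e.hasSum_iff]
    have hfun : ((fun k : T => f (r, k)) ∘ e) = fun n : ℕ =>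
        (Nat.totient (r : ℕ) : ℝ) / ((r : ℕ) : ℝ) * (s (r : ℕ) ^ (n + 1) / (n + 1)) := by
      funext n
      simp only [Function.comp, hf, e, Equiv.coe_fn_mk]
      have hn1 : ((n : ℝ) + 1) ≠ 0 := by positivity
      push_cast
      field_simp
    rw [hfun, hlog]
    simpa [mul_div_assoc] using H
  have hnn : 0 ≤ f := by
    intro p
    apply div_nonneg
    · exact mul_nonneg (Nat.cast_nonneg _) (pow_nonneg (h0 _ p.1.2) _)
    · positivity
  -- summability of the double family
  have hsum2 : Summable fun r : T => ∑' k : T, f (r, k) := by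
    have : (fun r : T => ∑' k : T, f (r, k)) = fun r : T =>
        (Nat.totient (r : ℕ) : ℝ) / ((r : ℕ) : ℝ) * Real.log (1 / (1 - s (r : ℕ))) := by
      funext r; exact (key r).tsum_eq
    rw [this]; exact hZ
  have hf_sum : Summable f :=
    (summable_prod_of_nonneg hnn).2 ⟨fun r => (key r).summable, hsum2⟩
  -- the pairing equivalence with sigma of divisors
  have hmulpos : ∀ r k : T, 1 ≤ (r : ℕ) * (k : ℕ) := fun r k =>
    Nat.one_le_iff_ne_zero.2 (Nat.mul_ne_zero (Nat.one_le_iff_ne_zero.1 r.2)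
      (Nat.one_le_iff_ne_zero.1 k.2))
  let E : T × T ≃ Σ n : T, {d : ℕ // d ∈ (n : ℕ).divisors} :=
    { toFun := fun p => ⟨⟨(p.1 : ℕ) * (p.2 : ℕ), hmulpos p.1 p.2⟩,
        ⟨(p.1 : ℕ), Nat.mem_divisors.2 ⟨Dvd.intro _ rfl,
          Nat.one_le_iff_ne_zero.1 (hmulpos p.1 p.2)⟩⟩⟩
      invFun := fun q =>
        (⟨(q.2 : ℕ), Nat.pos_of_mem_divisors q.2.2⟩,
         ⟨(q.1 : ℕ) / (q.2 : ℕ), Nat.div_pos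
           (Nat.le_of_dvd (Nat.lt_of_lt_of_le Nat.zero_lt_one q.1.2)
             (Nat.dvd_of_mem_divisors q.2.2))
           (Nat.pos_of_mem_divisors q.2.2)⟩)
      left_inv := fun p => by
        obtain ⟨r, k⟩ := p
        have hr : 0 < (r : ℕ) := r.2
        ext <;> simp [Nat.mul_div_cancel_left _ hr]
      right_inv := fun q => by
        obtain ⟨n, d⟩ := q
        have hd : (d : ℕ) ∣ (n : ℕ) := Nat.dvd_of_mem_divisors d.2
        have hval : (d : ℕ) * ((n : ℕ) / (d : ℕ)) = (n : ℕ) := Nat.mul_div_cancel' hd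
        refine Sigma.ext (Subtype.ext hval) ?_
        refine (Subtype.heq_iff_coe_eq ?_).2 rfl
        intro x
        show x ∈ ((d : ℕ) * ((n : ℕ) / (d : ℕ))).divisors ↔ x ∈ ((n : ℕ)).divisors
        rw [hval] }
  have hEsymm : ∀ q : Σ n : T, {d : ℕ // d ∈ (n : ℕ).divisors},
      f (E.symm q) = (Nat.totient (q.2 : ℕ) : ℝ) * s (q.2 : ℕ) ^ ((q.1 : ℕ) / (q.2 : ℕ))
        / ((q.1 : ℕ) : ℝ) := by
    intro ⟨n, d⟩
    have hd : (d : ℕ) ∣ (n : ℕ) := Nat.dvd_of_mem_divisors d.2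
    have hval : (d : ℕ) * ((n : ℕ) / (d : ℕ)) = (n : ℕ) := Nat.mul_div_cancel' hd
    simp only [hf, E, Equiv.coe_fn_symm_mk]
    rw [← Nat.cast_mul, hval]
  have hfsig : Summable fun q : Σ n : T, {d : ℕ // d ∈ (n : ℕ).divisors} => f (E.symm q) :=
    E.symm.summable_iff.2 hf_sum
  -- inner finite sums
  have hinner : ∀ n : T, ∑' d : {d : ℕ // d ∈ (n : ℕ).divisors}, f (E.symm ⟨n, d⟩)
      = (1 / ((n : ℕ) : ℝ)) *
        ∑ d ∈ (n : ℕ).divisors, (Nat.totient d : ℝ) * s d ^ ((n : ℕ) / d) := by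
    intro n
    rw [tsum_fintype]
    rw [Finset.mul_sum]
    rw [← Finset.sum_coe_sort ((n : ℕ).divisors)
      (fun d => 1 / ((n : ℕ) : ℝ) * ((Nat.totient d : ℝ) * s d ^ ((n : ℕ) / d)))]
    refine Finset.sum_congr rfl fun d _ => ?_
    rw [hEsymm ⟨n, d⟩]
    ring
  have hske : HasSum (fun q : Σ n : T, {d : ℕ // d ∈ (n : ℕ).divisors} => f (E.symm q))
      (∑' p : T × T, f p) := by
    have := E.symm.hasSum_iff (f := f) (a := ∑' p : T × T, f p)
    exact this.2 hf_sum.hasSum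
  have houter : Summable (fun n : T =>
      (1 / ((n : ℕ) : ℝ)) *
        ∑ d ∈ (n : ℕ).divisors, (Nat.totient d : ℝ) * s d ^ ((n : ℕ) / d)) := by
    have := hfsig.sigma (γ := fun n : T => {d : ℕ // d ∈ (n : ℕ).divisors})
    refine this.congr fun n => ?_
    exact hinner n
  refine ⟨houter, ?_⟩
  have h1' : ∑' n : T, (1 / ((n : ℕ) : ℝ)) *
      ∑ d ∈ (n : ℕ).divisors, (Nat.totient d : ℝ) * s d ^ ((n : ℕ) / d)
      = ∑' p : T × T, f p := by
    rw [← E.symm.tsum_eq f]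
    rw [hfsig.tsum_sigma' (fun n => (hasSum_fintype _).summable)]
    exact (tsum_congr fun n => (hinner n).symm)
  rw [h1', hf_sum.tsum_prod' fun r => (key r).summable]
  exact tsum_congr fun r => (key r).tsum_eq
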